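/- Let d2 > 0, y⋆ > 0, KP ≥ 0, KI > 0, u0 ∈ ℝ and set d1 = 0, and let χ̄ := (d2·y⋆², y⋆, (1 - u0·y⋆)/(KI·y⋆)) be the unique equilibrium of the PI closed-loop vector field f. Then the Jacobian matrix ∇f(χ̄) has a real eigenvalue λ > 0. Consequently the equilibrium is unstable for all circuit parameters and all settings of the PI gains. -/

import Mathlib

/-- with d1 = 0 the Jacobian of the PI closed-loop vector field at the
unique equilibrium has a real eigenvalue λ > 0, hence the equilibrium is unstable for
all circuit parameters and all settings of the PI gains. -/
theorem boost_pi_unstable_d1_zero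
    (d2 ystar KP KI u0 : ℝ) (hd2 : 0 < d2) (hy : 0 < ystar)
    (hKP : 0 ≤ KP) (hKI : 0 < KI)
    (f : ℝ × ℝ × ℝ → ℝ × ℝ × ℝ)
    (hf : ∀ χ : ℝ × ℝ × ℝ,
      f χ = (1 - (u0 + KI * χ.2.2 + KP * (ystar - χ.2.1)) * χ.2.1,
             -d2 * χ.2.1 + (u0 + KI * χ.2.2 + KP * (ystar - χ.2.1)) * χ.1,
             ystar - χ.2.1))
    (χbar : ℝ × ℝ × ℝ)
    (hχbar : χbar = (d2 * ystar ^ 2, ystar, (1 - u0 * ystar) / (KI * ystar))) :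
    ∃ lam : ℝ, 0 < lam ∧ ∃ v : ℝ × ℝ × ℝ, v ≠ 0 ∧ fderiv ℝ f χbar v = lam • v := by
  -- the characteristic cubic (multiplied by ystar^2 to clear denominators)
  set C : ℝ := KI * d2 * ystar ^ 4 - KP * ystar ^ 2 + 1 with hC
  set q : ℝ → ℝ := fun t =>
    ystar ^ 2 * t ^ 3 + d2 * ystar ^ 2 * (1 + KP * ystar ^ 2) * t ^ 2 + C * t - KI * ystar ^ 2
    with hqdef
  have hq0 : q 0 < 0 := by simp [hqdef]; positivity
  obtain ⟨M, hM1, hM2, hqM⟩ : ∃ M : ℝ, 1 ≤ M ∧ 0 < M ∧ 0 < q M := by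
    refine ⟨max 1 ((|C| + KI * ystar ^ 2 + 1) / ystar ^ 2), le_max_left _ _, ?_, ?_⟩
    · exact lt_of_lt_of_le one_pos (le_max_left _ _)
    · set M := max 1 ((|C| + KI * ystar ^ 2 + 1) / ystar ^ 2) with hM
      have h1 : (1:ℝ) ≤ M := le_max_left _ _
      have h2 : (|C| + KI * ystar ^ 2 + 1) / ystar ^ 2 ≤ M := le_max_right _ _
      have h2' : |C| + KI * ystar ^ 2 + 1 ≤ ystar ^ 2 * M := by
        rw [div_le_iff₀ (by positivity)] at h2; linarith [h2]
      have habs : -|C| ≤ C := neg_abs_le C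
      have hMpos : (0:ℝ) < M := lt_of_lt_of_le one_pos h1
      have key : (|C| + KI * ystar ^ 2 + 1) * M ≤ ystar ^ 2 * M * M :=
        mul_le_mul_of_nonneg_right h2' (le_of_lt hMpos)
      have keyM : M ^ 2 ≤ M ^ 3 := by nlinarith [mul_nonneg (sq_nonneg M) (sub_nonneg.2 h1)]
      have key2 : ystar ^ 2 * M ^ 2 ≤ ystar ^ 2 * M ^ 3 :=
        mul_le_mul_of_nonneg_left keyM (sq_nonneg ystar)
      have hA : 0 ≤ d2 * ystar ^ 2 * (1 + KP * ystar ^ 2) * M ^ 2 := by positivity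
      have hB : -|C| * M ≤ C * M := mul_le_mul_of_nonneg_right habs hMpos.le
      have hD : KI * ystar ^ 2 ≤ KI * ystar ^ 2 * M := by
        nlinarith [mul_le_mul_of_nonneg_left h1 (show (0:ℝ) ≤ KI * ystar ^ 2 by positivity)]
      simp only [hqdef]
      nlinarith [key, key2, hA, hB, hD, hMpos]
  -- root of q in (0, M]
  have hcont : ContinuousOn q (Set.Icc 0 M) := by fun_prop
  obtain ⟨lam, hlamI, hlam0⟩ : ∃ lam ∈ Set.Icc (0:ℝ) M, q lam = 0 := by
    have := intermediate_value_Icc (le_of_lt hM2) hcont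
    have h0 : (0:ℝ) ∈ Set.Icc (q 0) (q M) := ⟨le_of_lt hq0, le_of_lt hqM⟩
    obtain ⟨lam, hl, hql⟩ := this h0
    exact ⟨lam, hl, hql⟩
  have hlampos : 0 < lam := by
    rcases lt_or_eq_of_le hlamI.1 with h | h
    · exact h
    · exfalso; rw [← h] at hlam0; rw [hlam0] at hq0; exact lt_irrefl 0 hq0
  refine ⟨lam, hlampos, ⟨(-(KI * ystar) - (KP * ystar - 1 / ystar) * lam) / lam, -lam, 1⟩,
    ?_, ?_⟩
  · intro h
    have := congrArg (fun p : ℝ × ℝ × ℝ => p.2.2) h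
    simp at this
  -- compute the derivative
  · have hfe : f = fun χ : ℝ×ℝ×ℝ =>
        ((1 - (u0 + KI * χ.2.2 + KP * (ystar - χ.2.1)) * χ.2.1,
          -d2 * χ.2.1 + (u0 + KI * χ.2.2 + KP * (ystar - χ.2.1)) * χ.1,
          ystar - χ.2.1) : ℝ×ℝ×ℝ) := funext hf
    subst hfe
    have c1 : HasFDerivAt (fun χ : ℝ×ℝ×ℝ => χ.1)
        (ContinuousLinearMap.fst ℝ ℝ (ℝ×ℝ)) χbar := hasFDerivAt_fst
    have c2 : HasFDerivAt (fun χ : ℝ×ℝ×ℝ => χ.2.1)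
        ((ContinuousLinearMap.fst ℝ ℝ ℝ).comp (ContinuousLinearMap.snd ℝ ℝ (ℝ×ℝ))) χbar :=
      (hasFDerivAt_fst (p := χbar.2)).comp χbar hasFDerivAt_snd
    have c3 : HasFDerivAt (fun χ : ℝ×ℝ×ℝ => χ.2.2)
        ((ContinuousLinearMap.snd ℝ ℝ ℝ).comp (ContinuousLinearMap.snd ℝ ℝ (ℝ×ℝ))) χbar :=
      (hasFDerivAt_snd (p := χbar.2)).comp χbar hasFDerivAt_snd
    have hu : HasFDerivAt (fun χ : ℝ×ℝ×ℝ => u0 + KI * χ.2.2 + KP * (ystar - χ.2.1)) _ χbar :=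
      ((c3.const_mul KI).const_add u0).add ((c2.const_sub ystar).const_mul KP)
    have h1 := ((hu.mul c2).const_sub 1)
    have h2 := (c2.const_mul (-d2)).add (hu.mul c1)
    have h3 := c2.const_sub ystar
    have H := HasFDerivAt.prodMk h1 (HasFDerivAt.prodMk h2 h3)
    rw [HasFDerivAt.fderiv (f := fun χ : ℝ×ℝ×ℝ =>
        ((1 - (u0 + KI * χ.2.2 + KP * (ystar - χ.2.1)) * χ.2.1,
          -d2 * χ.2.1 + (u0 + KI * χ.2.2 + KP * (ystar - χ.2.1)) * χ.1,
          ystar - χ.2.1) : ℝ×ℝ×ℝ)) H]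
    simp only [ContinuousLinearMap.prod_apply, ContinuousLinearMap.add_apply,
      ContinuousLinearMap.coe_comp', Function.comp_apply, ContinuousLinearMap.coe_fst',
      ContinuousLinearMap.coe_snd', ContinuousLinearMap.neg_apply,
      ContinuousLinearMap.smul_apply, ContinuousLinearMap.coe_smul', Pi.smul_apply,
      ContinuousLinearMap.zero_apply, smul_eq_mul, Prod.smul_mk]
    subst hχbar
    have hyne : ystar ≠ 0 := ne_of_gt hy
    have hKIne : KI ≠ 0 := ne_of_gt hKI
    have hlamne : lam ≠ 0 := ne_of_gt hlampos
    simp only [hqdef, hC] at hlam0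
    refine Prod.ext ?_ (Prod.ext ?_ ?_)
    · show _ = lam * _
      field_simp
      ring
    · show _ = lam * _
      field_simp
      linear_combination hlam0
    · show _ = lam * (1:ℝ)
      ring
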